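/- Let q be an odd prime power with q ≡ -1 (mod 12). Then f(x) = x³ - 3x^{2q+1} is a bijection of 𝔽_{q²}. -/

import Mathlib

section Aux

variable {K : Type*} [Field K]

/-- Cubing is injective on the set of elements with `a ^ q = a`
when `gcd(3, q-1) = 1`. -/
lemma aux_cube_inj (q : ℕ) (hq : 2 ≤ q) (h3 : Nat.Coprime 3 (q - 1))
    (a b : K) (ha : a ^ q = a) (hb : b ^ q = b) (h : a ^ 3 = b ^ 3) : a = b := by
  by_cases hb0 : b = 0
  · subst hb0
    rw [zero_pow (by norm_num : 3 ≠ 0)] at h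
    exact pow_eq_zero_iff (by norm_num : 3 ≠ 0) |>.mp h
  · have ha0 : a ≠ 0 := by
      intro h0
      rw [h0, zero_pow (by norm_num : 3 ≠ 0)] at h
      exact hb0 (pow_eq_zero_iff (by norm_num : 3 ≠ 0) |>.mp h.symm)
    have haq : a ^ (q - 1) = 1 := by
      have h' : a ^ (q - 1) * a = 1 * a := by
        rw [one_mul, ← pow_succ, show q - 1 + 1 = q by omega]
        exact ha
      exact mul_right_cancel₀ ha0 h'
    have hbq : b ^ (q - 1) = 1 := by
      have h' : b ^ (q - 1) * b = 1 * b := by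
        rw [one_mul, ← pow_succ, show q - 1 + 1 = q by omega]
        exact hb
      exact mul_right_cancel₀ hb0 h'
    set t : K := a / b with htdef
    have ht3 : t ^ 3 = 1 := by
      rw [htdef, div_pow, h, div_self (pow_ne_zero _ hb0)]
    have htq : t ^ (q - 1) = 1 := by
      rw [htdef, div_pow, haq, hbq, div_one]
    have hd3 : orderOf t ∣ 3 := orderOf_dvd_of_pow_eq_one ht3
    have hdq : orderOf t ∣ q - 1 := orderOf_dvd_of_pow_eq_one htq
    have hdvd1 : orderOf t ∣ 1 := by
      have hg := Nat.dvd_gcd hd3 hdq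
      rwa [Nat.Coprime.gcd_eq_one h3] at hg
    have ht1 : t = 1 := orderOf_eq_one_iff.mp (Nat.dvd_one.mp hdvd1)
    rw [htdef, div_eq_one_iff_eq hb0] at ht1
    exact ht1

end Aux

/-- For an odd prime power q with q ≡ -1 (mod 12), f(x) = x³ - 3x^{2q+1}
permutes 𝔽_{q²}. -/
theorem stmt_17 {K : Type*} [Field K] [Fintype K] (q : ℕ)
    (hq : ∃ p k : ℕ, p.Prime ∧ 0 < k ∧ q = p ^ k)
    (hodd : Odd q) (hq12 : q % 12 = 11)
    (hcard : Fintype.card K = q ^ 2) :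
    Function.Bijective (fun x : K => x ^ 3 - 3 * x ^ (2 * q + 1)) := by
  obtain ⟨p, k, hp, hk, hqpk⟩ := hq
  -- basic numerics
  have hq2 : 2 ≤ q := by omega
  have hq4 : q % 4 = 3 := by omega
  have h3coprime : Nat.Coprime 3 (q - 1) := by
    refine (Nat.Prime.coprime_iff_not_dvd Nat.prime_three).mpr ?_
    intro hdvd
    omega
  -- characteristic of K is p
  have hpodd : p ≠ 2 := by
    intro h2
    subst h2
    have : Even q := by
      rw [hqpk]
      exact Nat.even_pow.mpr ⟨even_two, by omega⟩
    exact (Nat.not_even_iff_odd.mpr hodd) this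
  haveI : Fact p.Prime := ⟨hp⟩
  have hcharK : CharP K p := by
    obtain ⟨p', hp'⟩ := CharP.exists K
    haveI := hp'
    have hp'prime : p'.Prime := CharP.char_is_prime K p'
    haveI : Fact p'.Prime := ⟨hp'prime⟩
    obtain ⟨n, hn⟩ := FiniteField.card K p'
    have hdvd : p' ∣ p ^ (2 * k) := by
      have he : (p' : ℕ) ^ (n : ℕ) = p ^ (2 * k) := by
        rw [← hn.2, hcard, hqpk, ← pow_mul, mul_comm k 2]
      exact he ▸ dvd_pow_self p' n.ne_zero
    have : p' = p := (Nat.prime_dvd_prime_iff_eq hp'prime hp).mp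
      (hp'prime.dvd_of_dvd_pow hdvd)
    exact this ▸ hp'
  haveI := hcharK
  haveI : ExpChar K p := .prime hp
  have h2ne : (2 : K) ≠ 0 := by
    intro h2
    have hc : ((2 : ℕ) : K) = 0 := by exact_mod_cast h2
    have hdvd := (CharP.cast_eq_zero_iff K p 2).mp hc
    exact hpodd ((Nat.prime_dvd_prime_iff_eq hp Nat.prime_two).mp hdvd)
  -- Frobenius-type facts for q-th powers
  have hqadd : ∀ x y : K, (x + y) ^ q = x ^ q + y ^ q := by
    intro x y
    rw [hqpk]
    exact add_pow_char_pow x y p k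
  have hqsub : ∀ x y : K, (x - y) ^ q = x ^ q - y ^ q := by
    intro x y
    rw [hqpk]
    exact sub_pow_char_pow x y k
  have hq2pow : ∀ x : K, (x ^ q) ^ q = x := by
    intro x
    rw [← pow_mul, show q * q = q ^ 2 by ring, ← hcard]
    exact FiniteField.pow_card x
  -- a square root of -1
  have hsq : IsSquare (-1 : K) := by
    rw [FiniteField.isSquare_neg_one_iff, hcard, Nat.pow_mod, hq4]
    decide
  obtain ⟨i, hi⟩ := hsq
  rw [← sq] at hi
  have hi2 : i ^ 2 = -1 := hi.symm
  have hine : i ≠ 0 := by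
    intro h0
    rw [h0] at hi2
    simp at hi2
  -- i ^ q = -i
  have hiq : i ^ q = -i := by
    have hq1 : q = 2 * ((q - 1) / 2) + 1 := by omega
    have hodd2 : Odd ((q - 1) / 2) := by
      rw [Nat.odd_iff]; omega
    calc i ^ q = (i ^ 2) ^ ((q - 1) / 2) * i := by
          rw [← pow_mul, ← pow_succ, ← hq1]
      _ = (-1 : K) ^ ((q - 1) / 2) * i := by rw [hi2]
      _ = -i := by rw [hodd2.neg_one_pow]; ring
  have h1q : (1 : K) ^ q = 1 := one_pow q
  -- the two semilinear coordinates
  set A : K → K := fun x => (1 - i) * x + (1 + i) * x ^ q with hA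
  set B : K → K := fun x => (1 + i) * x + (1 - i) * x ^ q with hB
  have hAfix : ∀ x : K, (A x) ^ q = A x := by
    intro x
    rw [hA]
    simp only
    rw [hqadd, mul_pow, mul_pow, hqsub 1 i, hqadd 1 i, h1q, hiq, hq2pow]
    ring
  have hBfix : ∀ x : K, (B x) ^ q = B x := by
    intro x
    rw [hB]
    simp only
    rw [hqadd, mul_pow, mul_pow, hqsub 1 i, hqadd 1 i, h1q, hiq, hq2pow]
    ring
  have hcubefix : ∀ z : K, z ^ q = z → (z ^ 3) ^ q = z ^ 3 := by
    intro z hz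
    rw [← pow_mul, mul_comm 3 q, pow_mul, hz]
  -- key identity: 8 * f x = (i-1) * (A x)^3 - (i+1) * (B x)^3
  have hkey : ∀ x : K,
      8 * (x ^ 3 - 3 * x ^ (2 * q + 1)) = (i - 1) * (A x) ^ 3 - (i + 1) * (B x) ^ 3 := by
    intro x
    have hx2q : x ^ (2 * q + 1) = (x ^ q) ^ 2 * x := by
      rw [← pow_mul, ← pow_succ, mul_comm q 2]
    rw [hx2q, hA, hB]
    simp only
    set y := x ^ q with hy
    linear_combination (2 * i ^ 2 * x ^ 3 - 6 * i ^ 2 * x ^ 2 * y + 6 * i ^ 2 * x * y ^ 2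
      - 2 * i ^ 2 * y ^ 3 + 10 * x ^ 3 + 6 * x ^ 2 * y - 18 * x * y ^ 2 + 2 * y ^ 3) * hi2
  -- recovery identity: (1+i) * A x + (1-i) * B x = 4 * x
  have hrec : ∀ x : K, (1 + i) * A x + (1 - i) * B x = 4 * x := by
    intro x
    rw [hA, hB]
    simp only
    linear_combination (2 * x ^ q - 2 * x) * hi2
  -- injectivity of the linear map (u,v) ↦ (i-1)u - (i+1)v on fixed points
  have hLinj : ∀ u v : K, u ^ q = u → v ^ q = v → (i - 1) * u = (i + 1) * v →
      u = 0 ∧ v = 0 := by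
    intro u v hu hv huv
    have huv' : (-i - 1) * u = (-i + 1) * v := by
      have h := congrArg (fun z : K => z ^ q) huv
      rw [mul_pow, mul_pow, hqsub i 1, hqadd i 1, h1q, hiq, hu, hv] at h
      linear_combination h
    have h4iu : 4 * i * u = 0 := by
      linear_combination (1 - i) * huv + (-i - 1) * huv'
    have hu0 : u = 0 := by
      have h4i : (4 : K) * i ≠ 0 := by
        refine mul_ne_zero ?_ hine
        intro h4
        apply h2ne
        have : (2 : K) * 2 = 0 := by rw [show (2:K)*2 = 4 by norm_num, h4]
        rcases mul_eq_zero.mp this with h | h <;> exact h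
      rcases mul_eq_zero.mp h4iu with h | h
      · exact absurd h h4i
      · exact h
    refine ⟨hu0, ?_⟩
    rw [hu0, mul_zero] at huv
    have hi1 : (i + 1) ≠ 0 := by
      intro h0
      have hieq : i = -1 := by linear_combination h0
      rw [hieq] at hi2
      exact h2ne (by linear_combination hi2)
    rcases mul_eq_zero.mp huv.symm with h | h
    · exact absurd h hi1
    · exact h
  -- injectivity of f
  have h4ne : (4 : K) ≠ 0 := by
    intro h4
    apply h2ne
    have h22 : (2 : K) * 2 = 0 := by rw [show (2:K)*2 = 4 by norm_num, h4]
    rcases mul_eq_zero.mp h22 with h | h <;> exact h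
  have hinj : Function.Injective (fun x : K => x ^ 3 - 3 * x ^ (2 * q + 1)) := by
    intro x y hxy
    simp only at hxy
    have h8 : (i - 1) * (A x) ^ 3 - (i + 1) * (B x) ^ 3
        = (i - 1) * (A y) ^ 3 - (i + 1) * (B y) ^ 3 := by
      rw [← hkey x, ← hkey y, hxy]
    have hueq : (i - 1) * ((A x) ^ 3 - (A y) ^ 3) = (i + 1) * ((B x) ^ 3 - (B y) ^ 3) := by
      linear_combination h8
    have hufix : ((A x) ^ 3 - (A y) ^ 3) ^ q = (A x) ^ 3 - (A y) ^ 3 := by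
      rw [hqsub, hcubefix _ (hAfix x), hcubefix _ (hAfix y)]
    have hvfix : ((B x) ^ 3 - (B y) ^ 3) ^ q = (B x) ^ 3 - (B y) ^ 3 := by
      rw [hqsub, hcubefix _ (hBfix x), hcubefix _ (hBfix y)]
    obtain ⟨hu0, hv0⟩ := hLinj _ _ hufix hvfix hueq
    have hAcube : (A x) ^ 3 = (A y) ^ 3 := sub_eq_zero.mp hu0
    have hBcube : (B x) ^ 3 = (B y) ^ 3 := sub_eq_zero.mp hv0
    have hAe : A x = A y := aux_cube_inj q hq2 h3coprime _ _ (hAfix x) (hAfix y) hAcube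
    have hBe : B x = B y := aux_cube_inj q hq2 h3coprime _ _ (hBfix x) (hBfix y) hBcube
    have h4x : (4 : K) * x = 4 * y := by
      rw [← hrec x, ← hrec y, hAe, hBe]
    exact mul_left_cancel₀ h4ne h4x
  exact Finite.injective_iff_bijective.mp hinj
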